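/- Let q ∈ [0,1], N ≥ 2, and let i_1, …, i_n ∈ {1, …, N−1} be indices such that the permutation X = s_{i_1} ∘ s_{i_2} ∘ ⋯ ∘ s_{i_n} has Coxeter length ℓ(X) = n, i.e. the word (i_1, …, i_n) is reduced. Then (π_{i_n} ∘ ⋯ ∘ π_{i_1})(δ_id) = δ_X: applying the operators π_{i_1}, …, π_{i_n} in order to the point mass at the identity yields the permutation X with probability one, regardless of q. -/

import Mathlib

open MeasureTheory
open scoped NNReal

/-- Equip the finite symmetric group `S_N` with the discrete (full) σ-algebra. -/
instance (N : ℕ) : MeasurableSpace (Equiv.Perm (Fin N)) := ⊤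

/-- The adjacent transposition `s_i` of `{1, …, N}` exchanging `i` and `i+1`
(for `1 ≤ i ≤ N−1`; positions in `Fin N` are 0-indexed, so `s_i` swaps the
0-indexed positions `i−1` and `i`). -/
def adjT (N : ℕ) (i : {i : ℕ // 1 ≤ i ∧ i < N}) : Equiv.Perm (Fin N) :=
  Equiv.swap ⟨i.1 - 1, by omega⟩ ⟨i.1, i.2.2⟩

/-- The operator `τ_i : η ↦ η ∘ s_i`, exchanging the entries in positions
`i` and `i+1`. -/
def tauP (N : ℕ) (i : {i : ℕ // 1 ≤ i ∧ i < N}) (η : Equiv.Perm (Fin N)) :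
    Equiv.Perm (Fin N) :=
  η * adjT N i

/-- The operator `σ_i : η ↦ η ∘ s_i` if `η(i) < η(i+1)` and `η ↦ η` otherwise,
sorting positions `i`, `i+1` into decreasing order. -/
def sigmaP (N : ℕ) (i : {i : ℕ // 1 ≤ i ∧ i < N}) (η : Equiv.Perm (Fin N)) :
    Equiv.Perm (Fin N) :=
  if η ⟨i.1 - 1, by omega⟩ < η ⟨i.1, i.2.2⟩ then η * adjT N i else η

/-- The Markov operator `π_i ν = q·(τ_i)_*ν + (1−q)·(σ_i)_*ν` on measures
on `S_N`. -/
noncomputable def piP (N : ℕ) (q : ℝ≥0) (i : {i : ℕ // 1 ≤ i ∧ i < N})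
    (ν : Measure (Equiv.Perm (Fin N))) : Measure (Equiv.Perm (Fin N)) :=
  q • ν.map (tauP N i) + (1 - q) • ν.map (sigmaP N i)


def invN {N : ℕ} (η : Equiv.Perm (Fin N)) : ℕ :=
  (Finset.univ.filter fun p : Fin N × Fin N => p.1 < p.2 ∧ η p.2 < η p.1).card

lemma invN_one {N : ℕ} : invN (1 : Equiv.Perm (Fin N)) = 0 := by
  rw [invN, Finset.card_eq_zero, Finset.filter_eq_empty_iff]
  rintro p - ⟨h1, h2⟩
  exact absurd h2 (lt_asymm h1)

lemma swap_lt_iff {N : ℕ} (a b : Fin N) (hab : (a:ℕ) + 1 = b) (x y : Fin N)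
    (h1 : ¬(x = a ∧ y = b)) (h2 : ¬(x = b ∧ y = a)) :
    x < y ↔ Equiv.swap a b x < Equiv.swap a b y := by
  simp only [Equiv.swap_apply_def]
  simp only [Fin.ext_iff, Fin.lt_def] at *
  split_ifs <;> omega

lemma invN_mul_swap {N : ℕ} (a b : Fin N) (hab : (a:ℕ) + 1 = b)
    (η : Equiv.Perm (Fin N)) (h : η a < η b) :
    invN (η * Equiv.swap a b) = invN η + 1 := by
  classical
  set s := Equiv.swap a b with hs
  have hab' : a < b := by rw [Fin.lt_def]; omega
  have hsa : s a = b := Equiv.swap_apply_left a b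
  have hsb : s b = a := Equiv.swap_apply_right a b
  have hgg : ∀ x : Fin N, s (s x) = x := fun x => Equiv.swap_apply_self a b x
  have key : (Finset.univ.filter fun p : Fin N × Fin N =>
        p.1 < p.2 ∧ (η * s) p.2 < (η * s) p.1)
      = insert (a, b) ((Finset.univ.filter fun p : Fin N × Fin N =>
        p.1 < p.2 ∧ η p.2 < η p.1).image fun p => (s p.1, s p.2)) := by
    ext ⟨x, y⟩
    rw [Finset.mem_filter]
    simp only [Finset.mem_filter_univ, Finset.mem_filter, Finset.mem_insert, Finset.mem_image, Finset.mem_univ,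
      true_and, Equiv.Perm.mul_apply, Prod.mk.injEq, Prod.ext_iff]
    constructor
    · rintro ⟨hxy, hC⟩
      by_cases hp : x = a ∧ y = b
      · exact Or.inl hp
      · refine Or.inr ⟨(s x, s y), ⟨?_, by simpa [hgg] using hC⟩, by simp [hgg]⟩
        rw [swap_lt_iff a b hab (s x) (s y) ?_ ?_]
        · simpa [← hs, hgg] using hxy
        · rintro ⟨hx, hy⟩
          have hx' : x = b := s.injective (by rw [hx, hsb])
          have hy' : y = a := s.injective (by rw [hy, hsa])
          rw [hx', hy'] at hxy
          have : (b:ℕ) < (a:ℕ) := hxy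
          omega
        · rintro ⟨hx, hy⟩
          have hx' : x = a := s.injective (by rw [hx, hsa])
          have hy' : y = b := s.injective (by rw [hy, hsb])
          exact absurd ⟨hx', hy'⟩ hp
    · rintro (⟨rfl, rfl⟩ | ⟨⟨u, v⟩, ⟨huv, hC⟩, hu, hv⟩)
      · exact ⟨hab', by rw [hsa, hsb]; exact h⟩
      · subst hu; subst hv
        refine ⟨?_, by simpa [hgg] using hC⟩
        rw [← swap_lt_iff a b hab u v ?_ ?_]
        · exact huv
        · rintro ⟨rfl, rfl⟩
          exact absurd hC (lt_asymm h)
        · rintro ⟨h1', h2'⟩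
          rw [h1', h2'] at huv
          have : (b:ℕ) < (a:ℕ) := huv
          omega
  have hinj : Function.Injective (fun p : Fin N × Fin N => (s p.1, s p.2)) := by
    rintro ⟨u, v⟩ ⟨u', v'⟩ huv
    simp only [Prod.mk.injEq] at huv ⊢
    exact ⟨s.injective huv.1, s.injective huv.2⟩
  have hmem : (a, b) ∉ (Finset.univ.filter fun p : Fin N × Fin N =>
      p.1 < p.2 ∧ η p.2 < η p.1).image fun p => (s p.1, s p.2) := by
    simp only [Finset.mem_image, Finset.mem_filter_univ, Finset.mem_filter, Finset.mem_univ, true_and, Prod.mk.injEq,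
      Prod.ext_iff, not_exists]
    rintro ⟨u, v⟩ ⟨⟨huv, -⟩, hu, hv⟩
    have hu' : u = b := s.injective (by rw [hu, hsb])
    have hv' : v = a := s.injective (by rw [hv, hsa])
    rw [hu', hv'] at huv
    have : (b:ℕ) < (a:ℕ) := huv
    omega
  rw [invN, key, Finset.card_insert_of_notMem hmem, Finset.card_image_of_injective _ hinj, invN]

lemma eq_one_of_strictMono {N : ℕ} (η : Equiv.Perm (Fin N)) (h : StrictMono η) : η = 1 := by
  have := StrictMono.orderIsoOfSurjective η h η.surjective
  ext x
  have h1 : ((StrictMono.orderIsoOfSurjective η h η.surjective) x : ℕ) = x :=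
    Fin.coe_orderIso_apply _ x
  rw [StrictMono.coe_orderIsoOfSurjective] at h1
  simpa [Fin.ext_iff] using h1

lemma invN_ascent {N : ℕ} (η : Equiv.Perm (Fin N)) (i : {i : ℕ // 1 ≤ i ∧ i < N})
    (hi : η ⟨i.1 - 1, by omega⟩ < η ⟨i.1, i.2.2⟩) :
    invN (η * adjT N i) = invN η + 1 :=
  invN_mul_swap _ _ (by simp; omega) η hi

lemma invN_descent {N : ℕ} (η : Equiv.Perm (Fin N)) (i : {i : ℕ // 1 ≤ i ∧ i < N})
    (hi : η ⟨i.1, i.2.2⟩ < η ⟨i.1 - 1, by omega⟩) :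
    invN η = invN (η * adjT N i) + 1 := by
  have h2 : η * adjT N i * Equiv.swap (⟨i.1 - 1, by omega⟩ : Fin N) ⟨i.1, i.2.2⟩ = η :=
    Equiv.mul_swap_mul_self _ _ _
  have key := invN_mul_swap (⟨i.1 - 1, by omega⟩ : Fin N) ⟨i.1, i.2.2⟩ (by simp; omega)
    (η * adjT N i) (by
      simp only [adjT, Equiv.Perm.mul_apply, Equiv.swap_apply_left, Equiv.swap_apply_right]
      exact hi)
  rw [h2] at key
  omega


lemma eq_one_of_no_descent {N : ℕ} (η : Equiv.Perm (Fin N))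
    (h : ∀ i : {i : ℕ // 1 ≤ i ∧ i < N},
      ¬ η ⟨i.1, i.2.2⟩ < η ⟨i.1 - 1, by omega⟩) : η = 1 := by
  rcases N with _ | M
  · ext x; exact absurd x.2 (by omega)
  · apply eq_one_of_strictMono
    rw [Fin.strictMono_iff_lt_succ]
    intro i
    have hi := h ⟨(i : ℕ) + 1, by omega, by omega⟩
    have ha : (⟨(i:ℕ) + 1 - 1, by omega⟩ : Fin (M+1)) = Fin.castSucc i := by
      simp [Fin.ext_iff]
    have hb : (⟨(i:ℕ) + 1, by omega⟩ : Fin (M+1)) = Fin.succ i := by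
      simp [Fin.ext_iff]
    rw [ha, hb] at hi
    rcases lt_or_eq_of_le (not_lt.1 hi) with h' | h'
    · exact h'
    · exact absurd (η.injective h') (by simp [Fin.ext_iff])

lemma exists_word {N : ℕ} : ∀ (n : ℕ) (η : Equiv.Perm (Fin N)), invN η = n →
    ∃ v : List {i : ℕ // 1 ≤ i ∧ i < N},
      (v.map (adjT N)).prod = η ∧ v.length = n := by
  intro n
  induction n with
  | zero =>
    intro η hη
    refine ⟨[], ?_, rfl⟩
    have : η = 1 := by
      apply eq_one_of_no_descent
      intro i hi
      have := invN_descent η i hi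
      omega
    simp [this]
  | succ m ih =>
    intro η hη
    have hne : η ≠ 1 := by
      intro h1
      rw [h1, invN_one] at hη
      omega
    have hd : ∃ i : {i : ℕ // 1 ≤ i ∧ i < N},
        η ⟨i.1, i.2.2⟩ < η ⟨i.1 - 1, by omega⟩ := by
      by_contra hd
      push_neg at hd
      exact hne (eq_one_of_no_descent η (fun i => not_lt.2 (hd i)))
    obtain ⟨i, hi⟩ := hd
    have key := invN_descent η i hi
    obtain ⟨v, hv, hvl⟩ := ih (η * adjT N i) (by omega)
    refine ⟨v ++ [i], ?_, by simp [hvl]⟩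
    rw [List.map_append, List.prod_append, hv]
    simp only [List.map_cons, List.map_nil, List.prod_cons, List.prod_nil, mul_one]
    rw [adjT, mul_assoc, Equiv.swap_mul_self, mul_one]

lemma piP_dirac {N : ℕ} (q : ℝ≥0) (hq : q ≤ 1) (i : {i : ℕ // 1 ≤ i ∧ i < N})
    (η : Equiv.Perm (Fin N)) (h : η ⟨i.1 - 1, by omega⟩ < η ⟨i.1, i.2.2⟩) :
    piP N q i (Measure.dirac η) = Measure.dirac (η * adjT N i) := by
  rw [piP, Measure.map_dirac' measurable_from_top, Measure.map_dirac' measurable_from_top,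
    tauP, sigmaP, if_pos h, ← add_smul, add_tsub_cancel_of_le hq, one_smul]

lemma main_aux {N : ℕ} (q : ℝ≥0) (hq : q ≤ 1) :
    ∀ (w : List {i : ℕ // 1 ≤ i ∧ i < N}) (η : Equiv.Perm (Fin N)),
    (∀ v : List {i : ℕ // 1 ≤ i ∧ i < N},
       (v.map (adjT N)).prod = η * (w.map (adjT N)).prod → invN η + w.length ≤ v.length) →
    w.foldl (fun ν i => piP N q i ν) (Measure.dirac η)
      = Measure.dirac (η * (w.map (adjT N)).prod) := by
  intro w
  induction w with
  | nil => intro η _; simp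
  | cons i w' ih =>
    intro η hred
    have h : η ⟨i.1 - 1, by omega⟩ < η ⟨i.1, i.2.2⟩ := by
      rcases lt_trichotomy (η ⟨i.1 - 1, by omega⟩) (η ⟨i.1, i.2.2⟩) with h' | h' | h'
      · exact h'
      · exact absurd (η.injective h') (by simp [Fin.ext_iff]; omega)
      · exfalso
        have hdesc := invN_descent η i h'
        obtain ⟨v₀, hv₀, hl₀⟩ := exists_word (invN (η * adjT N i)) (η * adjT N i) rfl
        have hprod : ((v₀ ++ w').map (adjT N)).prod = η * ((i :: w').map (adjT N)).prod := by
          rw [List.map_append, List.prod_append, hv₀, List.map_cons, List.prod_cons, mul_assoc]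
        have := hred (v₀ ++ w') hprod
        simp only [List.length_append, List.length_cons, hl₀] at this
        omega
    have hstep : (i :: w').foldl (fun ν j => piP N q j ν) (Measure.dirac η)
        = w'.foldl (fun ν j => piP N q j ν) (Measure.dirac (η * adjT N i)) := by
      rw [List.foldl_cons, piP_dirac q hq i η h]
    rw [hstep, ih (η * adjT N i) ?_]
    · rw [List.map_cons, List.prod_cons, mul_assoc]
    · intro v hv
      have := hred v (by rw [hv, List.map_cons, List.prod_cons, mul_assoc])
      rw [invN_ascent η i h]
      simp only [List.length_cons] at this ⊢
      omega


/-- If the word `(i_1, …, i_n)` is reduced, i.e. the permutation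
`X = s_{i_1} ∘ ⋯ ∘ s_{i_n}` has Coxeter length `n` (no shorter word of adjacent
transpositions has product `X`), then applying the operators
`π_{i_1}, …, π_{i_n}` in order to the point mass at the identity yields the
point mass at `X`, regardless of `q`. -/
theorem piP_reduced_word_dirac (q : ℝ≥0) (hq : q ≤ 1) (N : ℕ) (hN : 2 ≤ N)
    (w : List {i : ℕ // 1 ≤ i ∧ i < N})
    (hred : ∀ v : List {i : ℕ // 1 ≤ i ∧ i < N},
      (v.map (adjT N)).prod = (w.map (adjT N)).prod → w.length ≤ v.length) :
    w.foldl (fun ν i => piP N q i ν) (Measure.dirac 1) =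
      Measure.dirac ((w.map (adjT N)).prod) := by
  have := main_aux q hq w 1 (fun v hv => by
    rw [invN_one, zero_add]
    exact hred v (by rw [hv, one_mul]))
  rwa [one_mul] at this
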